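/- Let (K, v) be a henselian valued field, let n ∈ ℕ with n ≥ 2, and let ε ∈ K× be such that v(ε) is not n-divisible in vK and v(ε)/n is a left-sided limit point of vK, i.e. for every c ∈ vK with c > 0 there exists g ∈ vK with v(ε) − c < n·g < v(ε). Define Ψ_ε = {ε·x^n : x ∈ K, v(ε·x^n) > 0} and Ω_ε = {x^n − x^(n−1) : x ∈ K and there exist y ∈ K and z ∈ Ψ_ε with z·(y^n − y^(n−1)) = x^n − x^(n−1)}. Then Ω_ε = 𝓜_v, the maximal ideal of the valuation ring of v. -/

import Mathlib

open Polynomial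

section ValuationPrelude

variable {K : Type*} [Field K] {G : Type*} [AddCommGroup G] [LinearOrder G] [IsOrderedAddMonoid G]

/-- `v : K → G ∪ {∞}` is a (surjective) valuation on the field `K` with value group `G`. -/
def IsValuation (v : K → WithTop G) : Prop :=
  (∀ x, v x = ⊤ ↔ x = 0) ∧
  (∀ x y, v (x * y) = v x + v y) ∧
  (∀ x y, min (v x) (v y) ≤ v (x + y)) ∧
  (∀ g : G, ∃ x, v x = (g : WithTop G))

/-- Hensel's Lemma holds for `(K, v)` for all polynomials of degree at most `n`. -/
def DegLEHenselian (v : K → WithTop G) (n : ℕ) : Prop :=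
  ∀ f : Polynomial K, f.natDegree ≤ n → (∀ i, (0 : WithTop G) ≤ v (f.coeff i)) →
    ∀ a : K, (0 : WithTop G) ≤ v a →
      (0 : WithTop G) < v (f.eval a) →
      ¬ (0 : WithTop G) < v (f.derivative.eval a) →
      ∃ b : K, (0 : WithTop G) ≤ v b ∧ f.eval b = 0 ∧ (0 : WithTop G) < v (b - a)

/-- `(K, v)` is henselian: Hensel's Lemma holds for all polynomials. -/
def IsHenselianValuation (v : K → WithTop G) : Prop :=
  ∀ n : ℕ, DegLEHenselian v n

end ValuationPrelude

section Helpers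
variable {K : Type*} [Field K] {G : Type*} [AddCommGroup G] [LinearOrder G] [IsOrderedAddMonoid G]
variable {v : K → WithTop G}

lemma val_zero (hval : IsValuation v) : v 0 = ⊤ := (hval.1 0).2 rfl

lemma val_ne_top (hval : IsValuation v) {x : K} (hx : x ≠ 0) : v x ≠ ⊤ :=
  fun h => hx ((hval.1 x).1 h)

lemma val_exists (hval : IsValuation v) {x : K} (hx : x ≠ 0) : ∃ g : G, v x = (g : WithTop G) := by
  rcases WithTop.ne_top_iff_exists.1 (val_ne_top hval hx) with ⟨g, hg⟩
  exact ⟨g, hg.symm⟩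

lemma val_one (hval : IsValuation v) : v 1 = 0 := by
  have h := hval.2.1 1 1
  rw [one_mul] at h
  rcases val_exists hval (one_ne_zero (α := K)) with ⟨g, hg⟩
  rw [hg, ← WithTop.coe_add, WithTop.coe_inj] at h
  have : g = 0 := by
    have : g + g = g + 0 := by rw [add_zero]; exact h.symm
    exact (add_left_cancel this)
  rw [hg, this, WithTop.coe_zero]

lemma val_neg (hval : IsValuation v) (x : K) : v (-x) = v x := by
  have hm1 : v (-1 : K) = 0 := by
    have h : v ((-1 : K) * (-1)) = v (-1) + v (-1) := hval.2.1 _ _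
    rw [neg_one_mul, neg_neg, val_one hval] at h
    rcases val_exists hval (neg_ne_zero.2 (one_ne_zero (α := K))) with ⟨g, hg⟩
    rw [hg, ← WithTop.coe_add] at h
    have hg0 : g = 0 := by
      have h2 : g + g = 0 := (WithTop.coe_inj.1 h).symm
      rcases lt_trichotomy g 0 with hlt | heq | hgt
      · have := add_lt_add hlt hlt
        rw [h2, add_zero] at this
        exact absurd this (lt_irrefl _)
      · exact heq
      · have := add_lt_add hgt hgt
        rw [h2, add_zero] at this
        exact absurd this (lt_irrefl _)
    rw [hg, hg0, WithTop.coe_zero]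
  have : v (-x) = v (-1 * x) := by rw [neg_one_mul]
  rw [this, hval.2.1, hm1, zero_add]

lemma val_pow (hval : IsValuation v) {x : K} {g : G} (hg : v x = (g : WithTop G)) (k : ℕ) :
    v (x ^ k) = ((k • g : G) : WithTop G) := by
  induction k with
  | zero => simp [val_one hval]
  | succ k ih =>
      rw [pow_succ, hval.2.1, ih, hg, ← WithTop.coe_add, succ_nsmul]

lemma val_add_eq (hval : IsValuation v) {a b : K} (h : v a < v b) : v (a + b) = v a := by
  have h1 : v a ≤ v (a + b) := by
    have := hval.2.2.1 a b
    rwa [min_eq_left h.le] at this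
  have h2 : v (a + b) ≤ v a := by
    have h3 := hval.2.2.1 (a + b) (-b)
    rw [add_neg_cancel_right, val_neg hval] at h3
    rcases le_total (v b) (v (a + b)) with hc | hc
    · rw [min_eq_right hc] at h3
      exact absurd (lt_of_le_of_lt h3 h) (lt_irrefl _)
    · rw [min_eq_left hc] at h3
      exact h3
  exact le_antisymm h2 h1

lemma val_sub_eq (hval : IsValuation v) {a b : K} (h : v a < v b) : v (a - b) = v a := by
  rw [sub_eq_add_neg]
  exact val_add_eq hval (by rwa [val_neg hval])

lemma val_sub_ge (hval : IsValuation v) (a b : K) : min (v a) (v b) ≤ v (a - b) := by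
  have := hval.2.2.1 a (-b)
  rwa [val_neg hval, ← sub_eq_add_neg] at this

end Helpers

section Solve
variable {K : Type*} [Field K] {G : Type*} [AddCommGroup G] [LinearOrder G] [IsOrderedAddMonoid G]
variable {v : K → WithTop G}

lemma hensel_solve (hval : IsValuation v) (hhens : IsHenselianValuation v)
    {n : ℕ} (hn : 2 ≤ n) {w : K} (hw : (0 : WithTop G) < v w) :
    ∃ x : K, x ^ n - x ^ (n - 1) = w := by
  set f : K[X] := X ^ n - X ^ (n - 1) - C w with hf
  have hdeg : f.natDegree ≤ n := by
    refine le_trans (natDegree_sub_le _ _) ?_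
    simp only [natDegree_C, natDegree_X_pow]
    refine max_le (le_trans (natDegree_sub_le _ _) ?_) (by omega)
    simp only [natDegree_X_pow]
    omega
  have hcoeff : ∀ i, (0 : WithTop G) ≤ v (f.coeff i) := by
    intro i
    simp only [hf, coeff_sub, coeff_X_pow, coeff_C]
    split_ifs with h1 h2 h3 h2 h3 h3
    · omega
    · omega
    · omega
    · simp only [sub_zero]
      rw [val_one hval]
    · omega
    · simp only [zero_sub, sub_zero]
      rw [val_neg hval, val_one hval]
    · simp only [zero_sub, sub_self]
      rw [val_neg hval]
      exact hw.le
    · simp only [sub_zero, sub_self]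
      rw [val_zero hval]
      exact le_top
  have heval1 : f.eval 1 = -w := by simp [hf]
  have hder : f.derivative.eval 1 = 1 := by
    have h1 : (1 : ℕ) ≤ n := by omega
    simp only [hf, derivative_sub, derivative_C, derivative_X_pow, sub_zero, eval_sub,
      eval_mul, eval_pow, eval_natCast, eval_X, one_pow, mul_one, eval_C]
    rw [Nat.cast_sub h1]
    push_cast
    ring
  obtain ⟨b, hb0, hbeval, -⟩ := hhens n f hdeg hcoeff 1
    (by rw [val_one hval]) (by rw [heval1, val_neg hval]; exact hw)
    (by rw [hder, val_one hval]; exact lt_irrefl _)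
  refine ⟨b, ?_⟩
  have : b ^ n - b ^ (n - 1) - w = 0 := by
    simpa [hf] using hbeval
  exact sub_eq_zero.mp this
end Solve

theorem stmt2 {K : Type*} [Field K] {G : Type*} [AddCommGroup G] [LinearOrder G] [IsOrderedAddMonoid G]
    (v : K → WithTop G) (hval : IsValuation v) (hhens : IsHenselianValuation v)
    (n : ℕ) (hn : 2 ≤ n) (ε : K) (e : G) (he : v ε = (e : WithTop G))
    (hnd : ¬ ∃ h : G, e = n • h)
    (hlim : ∀ c : G, 0 < c → ∃ g : G, e - c < n • g ∧ n • g < e) :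
    {w : K | ∃ x : K, w = x ^ n - x ^ (n - 1) ∧
        ∃ y z : K,
          (∃ x' : K, z = ε * x' ^ n ∧ (0 : WithTop G) < v (ε * x' ^ n)) ∧
          z * (y ^ n - y ^ (n - 1)) = x ^ n - x ^ (n - 1)} =
      {w : K | (0 : WithTop G) < v w} := by
  have hε : ε ≠ 0 := by
    intro h
    rw [h, val_zero hval] at he
    exact (WithTop.coe_ne_top (a := e)) he.symm
  ext w
  simp only [Set.mem_setOf_eq]
  constructor
  · rintro ⟨x, rfl, y, z, ⟨x', rfl, hzpos⟩, heq⟩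
    by_cases hw0 : x ^ n - x ^ (n - 1) = 0
    · rw [hw0, val_zero hval]
      exact WithTop.coe_lt_top 0
    -- nonzero case
    have hz0 : ε * x' ^ n ≠ 0 := by
      intro h
      rw [h, zero_mul] at heq
      exact hw0 heq.symm
    have hx'0 : x' ≠ 0 := by
      intro h
      apply hz0
      rw [h, zero_pow (by omega), mul_zero]
    have hy0 : y ^ n - y ^ (n - 1) ≠ 0 := by
      intro h
      rw [h, mul_zero] at heq
      exact hw0 heq.symm
    have hyne : y ≠ 0 := by
      intro h
      apply hy0
      rw [h, zero_pow (by omega : n ≠ 0), zero_pow (by omega : n - 1 ≠ 0), sub_zero]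
    have hxne : x ≠ 0 := by
      intro h
      apply hw0
      rw [h, zero_pow (by omega : n ≠ 0), zero_pow (by omega : n - 1 ≠ 0), sub_zero]
    obtain ⟨gx', hgx'⟩ := val_exists hval hx'0
    obtain ⟨gy, hgy⟩ := val_exists hval hyne
    obtain ⟨gx, hgx⟩ := val_exists hval hxne
    have hvz : v (ε * x' ^ n) = ((e + n • gx' : G) : WithTop G) := by
      rw [hval.2.1, he, val_pow hval hgx', ← WithTop.coe_add]
    have hzposG : 0 < e + n • gx' := by
      rw [hvz] at hzpos
      exact_mod_cast hzpos
    have hvw : v (x ^ n - x ^ (n - 1)) = v (ε * x' ^ n) + v (y ^ n - y ^ (n - 1)) := by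
      rw [← heq, hval.2.1]
    rcases lt_or_ge gy 0 with hgyneg | hgynn
    · -- v(y^n - y^(n-1)) = n • gy
      have hlt : (((n • gy : G)) : WithTop G) < (((n - 1) • gy : G) : WithTop G) := by
        rw [WithTop.coe_lt_coe]
        have : n • gy = (n - 1) • gy + gy := by
          rw [← succ_nsmul]
          congr 1
          omega
        rw [this]
        exact add_lt_of_le_of_neg le_rfl hgyneg
      have hvy : v (y ^ n - y ^ (n - 1)) = ((n • gy : G) : WithTop G) := by
        rw [val_sub_eq hval (by rw [val_pow hval hgy, val_pow hval hgy]; exact hlt),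
          val_pow hval hgy]
      have hvwG : v (x ^ n - x ^ (n - 1)) = ((e + n • gx' + n • gy : G) : WithTop G) := by
        rw [hvw, hvz, hvy, ← WithTop.coe_add]
      rcases lt_or_ge gx 0 with hgxneg | hgxnn
      · -- contradiction with nondivisibility
        exfalso
        have hlt2 : (((n • gx : G)) : WithTop G) < (((n - 1) • gx : G) : WithTop G) := by
          rw [WithTop.coe_lt_coe]
          have : n • gx = (n - 1) • gx + gx := by
            rw [← succ_nsmul]; congr 1; omega
          rw [this]
          exact add_lt_of_le_of_neg le_rfl hgxneg
        have hvx : v (x ^ n - x ^ (n - 1)) = ((n • gx : G) : WithTop G) := by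
          rw [val_sub_eq hval (by rw [val_pow hval hgx, val_pow hval hgx]; exact hlt2),
            val_pow hval hgx]
        rw [hvx] at hvwG
        have : n • gx = e + n • gx' + n • gy := WithTop.coe_inj.1 hvwG
        apply hnd
        refine ⟨gx - gx' - gy, ?_⟩
        rw [smul_sub, smul_sub]
        rw [this]
        abel
      · -- v w ≥ 0; if = 0 contradiction, else done
        have hge : (0 : WithTop G) ≤ v (x ^ n - x ^ (n - 1)) := by
          refine le_trans ?_ (val_sub_ge hval (x ^ n) (x ^ (n - 1)))
          rw [val_pow hval hgx, val_pow hval hgx]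
          refine le_min ?_ ?_
          · exact_mod_cast nsmul_nonneg hgxnn n
          · exact_mod_cast nsmul_nonneg hgxnn (n - 1)
        rcases hge.lt_or_eq with hlt3 | heq3
        · exact hlt3
        · exfalso
          rw [hvwG] at heq3
          have h0 : e + n • gx' + n • gy = (0 : G) := by exact_mod_cast heq3.symm
          apply hnd
          refine ⟨-(gx' + gy), ?_⟩
          rw [smul_neg, smul_add]
          have h0' : e + (n • gx' + n • gy) = 0 := by rw [← add_assoc]; exact h0
          exact eq_neg_of_add_eq_zero_left h0'
    · -- gy ≥ 0 : v w > 0 directly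
      have hvy : (0 : WithTop G) ≤ v (y ^ n - y ^ (n - 1)) := by
        refine le_trans ?_ (val_sub_ge hval (y ^ n) (y ^ (n - 1)))
        rw [val_pow hval hgy, val_pow hval hgy]
        refine le_min ?_ ?_
        · exact_mod_cast nsmul_nonneg hgynn n
        · exact_mod_cast nsmul_nonneg hgynn (n - 1)
      rw [hvw]
      calc (0 : WithTop G) < v (ε * x' ^ n) := hzpos
        _ ≤ v (ε * x' ^ n) + v (y ^ n - y ^ (n - 1)) := le_add_of_nonneg_right hvy
  · -- backward direction
    intro hw
    obtain ⟨x, hx⟩ := hensel_solve hval hhens hn hw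
    refine ⟨x, hx.symm, ?_⟩
    by_cases hw0 : w = 0
    · -- use y = 0
      have hc : ∃ c : G, 0 < c := by
        by_contra h
        push_neg at h
        have h1 : e = 0 := le_antisymm (h e) (neg_nonpos.mp (h (-e)))
        exact hnd ⟨0, by rw [h1, smul_zero]⟩
      obtain ⟨c, hc⟩ := hc
      obtain ⟨g, -, hg2⟩ := hlim c hc
      obtain ⟨x', hx'⟩ := hval.2.2.2 (-g)
      have hzpos : (0 : WithTop G) < v (ε * x' ^ n) := by
        rw [hval.2.1, he, val_pow hval hx', ← WithTop.coe_add]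
        rw [← WithTop.coe_zero, WithTop.coe_lt_coe, smul_neg, ← sub_eq_add_neg]
        exact sub_pos.mpr hg2
      refine ⟨0, ε * x' ^ n, ⟨x', rfl, hzpos⟩, ?_⟩
      rw [zero_pow (by omega : n ≠ 0), zero_pow (by omega : n - 1 ≠ 0), sub_zero, mul_zero,
        hx, hw0]
    · -- general case
      obtain ⟨d, hd⟩ := val_exists hval hw0
      have hdpos : 0 < d := by
        rw [hd] at hw
        exact_mod_cast hw
      obtain ⟨g, hg1, hg2⟩ := hlim d hdpos
      obtain ⟨x', hx'⟩ := hval.2.2.2 (-g)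
      have hx'0 : x' ≠ 0 := by
        intro h
        rw [h, val_zero hval] at hx'
        exact (WithTop.coe_ne_top (a := -g)) hx'.symm
      have hvz : v (ε * x' ^ n) = ((e - n • g : G) : WithTop G) := by
        rw [hval.2.1, he, val_pow hval hx', ← WithTop.coe_add, smul_neg, ← sub_eq_add_neg]
      have hzpos : (0 : WithTop G) < v (ε * x' ^ n) := by
        rw [hvz, ← WithTop.coe_zero, WithTop.coe_lt_coe]
        exact sub_pos.mpr hg2
      have hz0 : ε * x' ^ n ≠ 0 := by
        intro h
        rw [h, val_zero hval] at hvz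
        exact (WithTop.coe_ne_top (a := e - n • g)) hvz.symm
      set u : K := w / (ε * x' ^ n) with hu
      have hu0 : u ≠ 0 := div_ne_zero hw0 hz0
      have hzu : (ε * x' ^ n) * u = w := by
        rw [hu]
        field_simp
      obtain ⟨du, hdu⟩ := val_exists hval hu0
      have hdueq : d = (e - n • g) + du := by
        have h := hval.2.1 (ε * x' ^ n) u
        rw [hzu, hd, hvz, hdu, ← WithTop.coe_add, WithTop.coe_inj] at h
        exact h
      have hdupos : (0 : WithTop G) < v u := by
        rw [hdu, ← WithTop.coe_zero, WithTop.coe_lt_coe]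
        have hdu2 : du = d - (e - n • g) := by rw [hdueq]; abel
        rw [hdu2]
        exact sub_pos.mpr (sub_lt_comm.mp hg1)
      obtain ⟨y, hy⟩ := hensel_solve hval hhens hn hdupos
      refine ⟨y, ε * x' ^ n, ⟨x', rfl, hzpos⟩, ?_⟩
      rw [hy, hzu, hx]
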